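/- arXiv:2105.00281 — 3 statements merged into one kernel-verified Lean document; each statement's English description precedes it below -/
import Mathlib

section
/- Let G be a simplicial group that is generated by degenerate elements in dimension 2 (e.g., a free simplicial group degenerate in dimensions ≥ 2). Then in dimension 1, the commutator subgroup [Ker d₀, Ker d₁] equals the image of the restriction of d₂ : G₂ → G₁ to the second Moore complex term NG₂ = Ker d₀ ∩ Ker d₁ (Brown–Loday lemma in low dimension). -/
section Aux

private lemma brown_loday_group_aux {H : Type*} [Group H] (Sa A B Sc Cc Dd : H)
    (hcomm : (A⁻¹ * B) * (Sc * Cc⁻¹) = (Sc * Cc⁻¹) * (A⁻¹ * B)) :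
    (Sa * A⁻¹ * B) * (Sc * Cc⁻¹ * Dd) = Sa * Sc * (Cc⁻¹ * A⁻¹) * (B * Dd) := by
  calc (Sa * A⁻¹ * B) * (Sc * Cc⁻¹ * Dd)
      = Sa * ((A⁻¹ * B) * (Sc * Cc⁻¹)) * Dd := by group
    _ = Sa * ((Sc * Cc⁻¹) * (A⁻¹ * B)) * Dd := by rw [hcomm]
    _ = Sa * Sc * (Cc⁻¹ * A⁻¹) * (B * Dd) := by group

end Aux

open commutatorElement

/-- Brown–Loday lemma in low dimension: for a simplicial group whose dimension-2 part
is generated by degenerate elements (encoded by the low-dimensional truncation: groups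
`G₀, G₁, G₂`, faces `d₀ d₁ : G₁ → G₀`, `D₀ D₁ D₂ : G₂ → G₁`, degeneracies
`s₀ : G₀ → G₁`, `t₀ t₁ : G₁ → G₂` satisfying the simplicial identities, with `G₂`
generated by `t₀(G₁) ∪ t₁(G₁)`), the commutator subgroup `[Ker d₀, Ker d₁]` of `G₁`
equals the image under `D₂` of the second Moore complex term `NG₂ = Ker D₀ ⊓ Ker D₁`. -/
theorem brown_loday_low_dimension
    {G₀ G₁ G₂ : Type*} [Group G₀] [Group G₁] [Group G₂]
    (d₀ d₁ : G₁ →* G₀) (s₀ : G₀ →* G₁)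
    (D₀ D₁ D₂ : G₂ →* G₁) (t₀ t₁ : G₁ →* G₂)
    (hd₀s₀ : ∀ x, d₀ (s₀ x) = x) (hd₁s₀ : ∀ x, d₁ (s₀ x) = x)
    (hD₀t₀ : ∀ x, D₀ (t₀ x) = x) (hD₁t₀ : ∀ x, D₁ (t₀ x) = x)
    (hD₂t₀ : ∀ x, D₂ (t₀ x) = s₀ (d₁ x))
    (hD₀t₁ : ∀ x, D₀ (t₁ x) = s₀ (d₀ x))
    (hD₁t₁ : ∀ x, D₁ (t₁ x) = x) (hD₂t₁ : ∀ x, D₂ (t₁ x) = x)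
    (hgen : Subgroup.closure (Set.range t₀ ∪ Set.range t₁) = (⊤ : Subgroup G₂)) :
    ⁅d₀.ker, d₁.ker⁆ = Subgroup.map D₂ (D₀.ker ⊓ D₁.ker) := by
  set C : Subgroup G₁ := ⁅d₀.ker, d₁.ker⁆ with hC
  -- derived simplicial identity: d₀ ∘ D₀ = d₀ ∘ D₁
  have E1 : ∀ g : G₂, d₀ (D₀ g) = d₀ (D₁ g) := by
    have : d₀.comp D₀ = d₀.comp D₁ := by
      apply MonoidHom.eq_of_eqOn_dense hgen
      rintro g (⟨x, rfl⟩ | ⟨x, rfl⟩) <;>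
        simp [hD₀t₀, hD₁t₀, hD₀t₁, hD₁t₁, hd₀s₀]
    intro g
    exact DFunLike.congr_fun this g
  -- quotient by the commutator subgroup
  let π : G₁ →* G₁ ⧸ C := QuotientGroup.mk' C
  have hker : ∀ x : G₁, π x = 1 ↔ x ∈ C := fun x => QuotientGroup.eq_one_iff x
  have comm : ∀ u w : G₁, u ∈ d₀.ker → w ∈ d₁.ker → π (u * w) = π (w * u) := by
    intro u w hu hw
    have h1 : ⁅u, w⁆ ∈ C := Subgroup.commutator_mem_commutator hu hw
    have h2 : π ⁅u, w⁆ = 1 := (hker _).mpr h1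
    have h3 : π u * π w = π w * π u :=
      commutatorElement_eq_one_iff_mul_comm.mp
        (by simpa [map_commutatorElement] using h2)
    simpa [map_mul] using h3
  -- the key invariant
  set P : G₂ → Prop := fun g =>
    π (D₂ g) = π (s₀ (d₁ (D₀ g)) * (D₀ g)⁻¹ * D₁ g) with hP
  have Pmul : ∀ g h : G₂, P g → P h → P (g * h) := by
    intro g h hg hh
    simp only [hP] at hg hh ⊢
    rw [map_mul D₂, map_mul π, hg, hh, map_mul D₀, map_mul D₁, map_mul d₁,
      map_mul s₀, mul_inv_rev]
    simp only [map_mul, map_inv]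
    apply brown_loday_group_aux
    have hu : (D₀ g)⁻¹ * D₁ g ∈ d₀.ker := by
      rw [MonoidHom.mem_ker, map_mul, map_inv, E1 g, inv_mul_cancel]
    have hw : s₀ (d₁ (D₀ h)) * (D₀ h)⁻¹ ∈ d₁.ker := by
      rw [MonoidHom.mem_ker, map_mul, map_inv, hd₁s₀, mul_inv_cancel]
    have := comm _ _ hu hw
    simpa [map_mul, map_inv, mul_assoc] using this
  have Pgen : ∀ g : G₂, g ∈ Set.range t₀ ∪ Set.range t₁ → P g := by
    rintro g (⟨x, rfl⟩ | ⟨x, rfl⟩) <;>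
      simp [hP, hD₀t₀, hD₁t₀, hD₂t₀, hD₀t₁, hD₁t₁, hD₂t₁, hd₁s₀]
  have Pone : P 1 := by simp [hP]
  -- the symmetrized set is a subgroup
  let K : Subgroup G₂ :=
    { carrier := {g | P g ∧ P g⁻¹}
      one_mem' := ⟨Pone, by simpa using Pone⟩
      mul_mem' := fun {a b} ha hb =>
        ⟨Pmul a b ha.1 hb.1, by rw [mul_inv_rev]; exact Pmul _ _ hb.2 ha.2⟩
      inv_mem' := fun {a} ha => ⟨ha.2, by rw [inv_inv]; exact ha.1⟩ }
  have hKtop : ∀ g : G₂, P g := by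
    intro g
    have hle : Subgroup.closure (Set.range t₀ ∪ Set.range t₁) ≤ K := by
      rw [Subgroup.closure_le]
      intro x hx
      refine ⟨Pgen x hx, Pgen x⁻¹ ?_⟩
      rcases hx with ⟨y, rfl⟩ | ⟨y, rfl⟩
      · exact Or.inl ⟨y⁻¹, by simp⟩
      · exact Or.inr ⟨y⁻¹, by simp⟩
    have : g ∈ K := hle (hgen ▸ Subgroup.mem_top g)
    exact this.1
  apply le_antisymm
  · -- [ker d₀, ker d₁] ≤ D₂(NG₂)
    rw [hC, Subgroup.commutator_le]
    intro a ha b hb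
    refine ⟨⁅t₁ a, t₀ b⁻¹ * t₁ b⁆, ⟨?_, ?_⟩, ?_⟩
    · show D₀ ⁅t₁ a, t₀ b⁻¹ * t₁ b⁆ = 1
      rw [map_commutatorElement]
      have : D₀ (t₁ a) = 1 := by
        rw [hD₀t₁, MonoidHom.mem_ker.mp ha, map_one]
      rw [this]
      simp
    · show D₁ ⁅t₁ a, t₀ b⁻¹ * t₁ b⁆ = 1
      rw [map_commutatorElement]
      have : D₁ (t₀ b⁻¹ * t₁ b) = 1 := by
        rw [map_mul, hD₁t₀, hD₁t₁, inv_mul_cancel]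
      rw [this]
      simp
    · rw [map_commutatorElement, hD₂t₁, map_mul, hD₂t₀, hD₂t₁, map_inv,
        MonoidHom.mem_ker.mp hb]
      simp
  · -- D₂(NG₂) ≤ [ker d₀, ker d₁]
    rintro x ⟨g, ⟨hg0, hg1⟩, rfl⟩
    have hp := hKtop g
    rw [hP] at hp
    rw [MonoidHom.mem_ker.1 hg0, MonoidHom.mem_ker.1 hg1] at hp
    simp only [map_one, inv_one, mul_one, one_mul] at hp
    exact (hker _).mp hp
end

section
/- Let G be a simplicial group. Every element x ∈ Ker d₁ ⊆ G₁ can be written as x = y · s₀ d₁(y⁻¹) for some y ∈ Ker d₀. Consequently, the Peiffer subgroup of the pre-crossed module (Ker d₀, G₀, d₁) (with G₀ acting on Ker d₀ by a^u = s₀(u)⁻¹ a s₀(u)) equals the commutator subgroup [Ker d₀, Ker d₁]. -/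
/-- For a simplicial group (encoded in low dimension by `d₀ d₁ : G₁ → G₀`,
`s₀ : G₀ → G₁` with `d₀ ∘ s₀ = d₁ ∘ s₀ = id`): every `x ∈ Ker d₁` can be written as
`x = y * s₀ (d₁ y⁻¹)` with `y ∈ Ker d₀`; consequently the Peiffer subgroup of the
pre-crossed module `(Ker d₀, G₀, d₁)` (with action `a^u = s₀(u)⁻¹ a s₀(u)`) equals the
commutator subgroup `[Ker d₀, Ker d₁]`. -/
theorem moore_decomposition_and_peiffer_eq_commutator
    {G₀ G₁ : Type*} [Group G₀] [Group G₁]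
    (d₀ d₁ : G₁ →* G₀) (s₀ : G₀ →* G₁)
    (hd₀s₀ : ∀ x, d₀ (s₀ x) = x) (hd₁s₀ : ∀ x, d₁ (s₀ x) = x)
    (P : Subgroup G₁)
    (hP : P = Subgroup.closure
      {z : G₁ | ∃ u a : G₁, u ∈ d₀.ker ∧ a ∈ d₀.ker ∧
        z = u⁻¹ * a * u * ((s₀ (d₁ u))⁻¹ * a * s₀ (d₁ u))⁻¹}) :
    (∀ x ∈ d₁.ker, ∃ y ∈ d₀.ker, x = y * s₀ (d₁ y⁻¹)) ∧
    P = ⁅d₀.ker, d₁.ker⁆ := by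
  have part1 : ∀ x ∈ d₁.ker, ∃ y ∈ d₀.ker, x = y * s₀ (d₁ y⁻¹) := by
    intro x hx
    have hx1 : d₁ x = 1 := hx
    refine ⟨x * (s₀ (d₀ x))⁻¹, ?_, ?_⟩
    · simp [MonoidHom.mem_ker, hd₀s₀]
    · simp [mul_inv_rev, map_mul, map_inv, hd₁s₀, hx1]
  refine ⟨part1, ?_⟩
  subst hP
  apply le_antisymm
  · rw [Subgroup.closure_le]
    rintro z ⟨u, a, hu, ha, rfl⟩
    have hw : u * (s₀ (d₁ u))⁻¹ ∈ d₁.ker := by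
      simp [MonoidHom.mem_ker, map_mul, map_inv, hd₁s₀]
    open scoped commutatorElement in
    have hc : ⁅a, u * (s₀ (d₁ u))⁻¹⁆ ∈ ⁅d₀.ker, d₁.ker⁆ :=
      Subgroup.commutator_mem_commutator ha hw
    open scoped commutatorElement in
    have heq : u⁻¹ * a * u * ((s₀ (d₁ u))⁻¹ * a * s₀ (d₁ u))⁻¹
        = u⁻¹ * ⁅a, u * (s₀ (d₁ u))⁻¹⁆ * (u⁻¹)⁻¹ := by
      simp only [commutatorElement_def]
      group
    rw [heq]
    exact Subgroup.Normal.conj_mem inferInstance _ hc u⁻¹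
  · rw [Subgroup.commutator_le]
    intro a ha x hx
    obtain ⟨y, hy, rfl⟩ := part1 x hx
    have hb : (s₀ (d₁ y))⁻¹ * a * s₀ (d₁ y) ∈ d₀.ker := by
      have : d₀ a = 1 := ha
      simp [MonoidHom.mem_ker, map_mul, map_inv, hd₀s₀, this]
    have hy' : y⁻¹ ∈ d₀.ker := inv_mem hy
    have hz : ((y⁻¹)⁻¹ * ((s₀ (d₁ y))⁻¹ * a * s₀ (d₁ y)) * y⁻¹ *
        ((s₀ (d₁ y⁻¹))⁻¹ * ((s₀ (d₁ y))⁻¹ * a * s₀ (d₁ y)) * s₀ (d₁ y⁻¹))⁻¹)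
        ∈ Subgroup.closure
          {z : G₁ | ∃ u a : G₁, u ∈ d₀.ker ∧ a ∈ d₀.ker ∧
            z = u⁻¹ * a * u * ((s₀ (d₁ u))⁻¹ * a * s₀ (d₁ u))⁻¹} :=
      Subgroup.subset_closure ⟨y⁻¹, (s₀ (d₁ y))⁻¹ * a * s₀ (d₁ y), hy', hb, rfl⟩
    open scoped commutatorElement in
    have heq : ⁅a, y * s₀ (d₁ y⁻¹)⁆ = ((y⁻¹)⁻¹ * ((s₀ (d₁ y))⁻¹ * a * s₀ (d₁ y)) * y⁻¹ *
        ((s₀ (d₁ y⁻¹))⁻¹ * ((s₀ (d₁ y))⁻¹ * a * s₀ (d₁ y)) * s₀ (d₁ y⁻¹))⁻¹)⁻¹ := by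
      simp only [commutatorElement_def, map_inv]
      group
    rw [heq]
    exact inv_mem hz
end

section
/- Let f : 𝔤 → 𝔥 be a surjective homomorphism of finite-dimensional nilpotent Lie algebras over a field k of characteristic zero, and let h₁, …, h_e generate 𝔥 (as a Lie algebra) with e at least the minimal number of generators of 𝔤. Then there exist generators g₁, …, g_e of 𝔤 with f(gᵢ) = hᵢ for all i (Gaschütz lemma for nilpotent Lie algebras). -/
open Submodule Module

section LinearAlgebra

variable {k V : Type} [Field k] [AddCommGroup V] [Module k V]

private lemma mem_span_compl_of_relation {e : ℕ} (v : Fin e → V) (c : Fin e → k) (i : Fin e)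
    (hci : c i ≠ 0) (hsum : ∑ j, c j • v j = 0) :
    v i ∈ Submodule.span k (v '' {j | j ≠ i}) := by
  have h1 : c i • v i + ∑ j ∈ Finset.univ.erase i, c j • v j = 0 := by
    rw [Finset.add_sum_erase _ (fun j => c j • v j) (Finset.mem_univ i)]
    exact hsum
  have h2 : v i = (c i)⁻¹ • (-∑ j ∈ Finset.univ.erase i, c j • v j) := by
    rw [eq_inv_smul_iff₀ hci]
    exact eq_neg_of_add_eq_zero_left h1
  rw [h2]
  refine Submodule.smul_mem _ _ (Submodule.neg_mem _ (Submodule.sum_mem _ ?_))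
  intro j hj
  refine Submodule.smul_mem _ _ (Submodule.subset_span ?_)
  exact ⟨j, Finset.ne_of_mem_erase hj, rfl⟩

private lemma gaschutz_linear [FiniteDimensional k V] (W : Submodule k V) {e : ℕ}
    (hV : finrank k V ≤ e) :
    ∀ v : Fin e → V, Submodule.span k (Set.range v) ⊔ W = ⊤ →
      ∃ w : Fin e → V, (∀ i, w i ∈ W) ∧
        Submodule.span k (Set.range fun i => v i + w i) = ⊤ := by
  suffices H : ∀ n : ℕ, ∀ v : Fin e → V,
      finrank k V ≤ finrank k (Submodule.span k (Set.range v)) + n →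
      Submodule.span k (Set.range v) ⊔ W = ⊤ →
      ∃ w : Fin e → V, (∀ i, w i ∈ W) ∧
        Submodule.span k (Set.range fun i => v i + w i) = ⊤ by
    intro v hv
    exact H (finrank k V) v (Nat.le_add_left _ _) hv
  intro n
  induction n with
  | zero =>
    intro v hn hv
    have htop : Submodule.span k (Set.range v) = ⊤ := by
      apply Submodule.eq_top_of_finrank_eq
      exact le_antisymm (Submodule.finrank_le _) (by simpa using hn)
    exact ⟨0, fun i => W.zero_mem, by simpa using htop⟩
  | succ n ih =>
    intro v hn hv
    by_cases htop : Submodule.span k (Set.range v) = ⊤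
    · exact ⟨0, fun i => W.zero_mem, by simpa using htop⟩
    -- find u ∈ W not in the span
    have hWle : ¬ W ≤ Submodule.span k (Set.range v) := by
      intro hle
      exact htop (by rw [← hv, sup_eq_left.mpr hle])
    obtain ⟨u, huW, hus⟩ := SetLike.not_le_iff_exists.mp hWle
    -- find a linear dependency
    have hnli : ¬ LinearIndependent k v := by
      intro hli
      apply htop
      apply Submodule.eq_top_of_finrank_eq
      refine le_antisymm (Submodule.finrank_le _) ?_
      rw [finrank_span_eq_card hli]
      simpa using hV
    obtain ⟨c, hsum, i, hci⟩ := Fintype.not_linearIndependent_iff.mp hnli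
    have hvi : v i ∈ Submodule.span k (v '' {j | j ≠ i}) :=
      mem_span_compl_of_relation v c i hci hsum
    set v' : Fin e → V := Function.update v i (v i + u) with hv'def
    have himage : v '' {j | j ≠ i} ⊆ Set.range v' := by
      rintro x ⟨j, hj, rfl⟩
      exact ⟨j, Function.update_of_ne hj _ _⟩
    have hvi' : v i ∈ Submodule.span k (Set.range v') :=
      Submodule.span_mono himage hvi
    have hviu : v i + u ∈ Submodule.span k (Set.range v') :=
      Submodule.subset_span ⟨i, Function.update_self i _ v⟩
    have hu' : u ∈ Submodule.span k (Set.range v') := by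
      have := Submodule.sub_mem _ hviu hvi'
      simpa using this
    have hle : Submodule.span k (Set.range v) ≤ Submodule.span k (Set.range v') := by
      rw [Submodule.span_le]
      rintro x ⟨j, rfl⟩
      by_cases hji : j = i
      · subst hji; exact hvi'
      · exact Submodule.subset_span ⟨j, Function.update_of_ne hji _ _⟩
    have hlt : Submodule.span k (Set.range v) < Submodule.span k (Set.range v') :=
      lt_of_le_of_ne hle (fun hEq => hus (hEq ▸ hu'))
    have hrank : finrank k (Submodule.span k (Set.range v)) <
        finrank k (Submodule.span k (Set.range v')) :=
      Submodule.finrank_lt_finrank_of_lt hlt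
    have hn' : finrank k V ≤ finrank k (Submodule.span k (Set.range v')) + n := by omega
    have hsup' : Submodule.span k (Set.range v') ⊔ W = ⊤ :=
      eq_top_iff.mpr (hv ▸ sup_le_sup_right hle W)
    obtain ⟨w', hw'W, hw'top⟩ := ih v' hn' hsup'
    refine ⟨fun j => (if j = i then u else 0) + w' j, ?_, ?_⟩
    · intro j
      refine W.add_mem ?_ (hw'W j)
      by_cases hji : j = i
      · simpa [hji] using huW
      · simp [hji]
    · have heq : (fun j => v j + ((if j = i then u else 0) + w' j)) =
          fun j => v' j + w' j := by
        funext j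
        by_cases hji : j = i
        · subst hji
          simp only [if_pos rfl, hv'def, Function.update_self]
          rw [if_pos trivial]
          abel
        · simp only [if_neg hji, hv'def, Function.update_of_ne hji]
          abel
      rw [heq]
      exact hw'top

end LinearAlgebra

section Lie

variable {k L : Type} [Field k] [LieRing L] [LieAlgebra k L]

/-- The commutator submodule `[L, L]` as a `Submodule`. -/
private def commSub (k L : Type) [Field k] [LieRing L] [LieAlgebra k L] : Submodule k L :=
  ((⁅(⊤ : LieIdeal k L), (⊤ : LieIdeal k L)⁆ : LieIdeal k L) : Submodule k L)

private lemma commSub_eq :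
    commSub k L = LieSubmodule.toSubmodule
      (⁅(⊤ : LieIdeal k L), (⊤ : LieIdeal k L)⁆ : LieIdeal k L) :=
  LieIdeal.toLieSubalgebra_toSubmodule k L _

private lemma lieSpan_le_span_sup_comm (s : Set L) (x : L)
    (hx : x ∈ LieSubalgebra.lieSpan k L s) :
    x ∈ Submodule.span k s ⊔ commSub k L := by
  let K : LieSubalgebra k L :=
    { (Submodule.span k s ⊔ commSub k L : Submodule k L) with
      lie_mem' := fun {a b} _ _ => by
        refine Submodule.mem_sup_right ?_
        rw [commSub_eq]
        exact (LieSubmodule.mem_toSubmodule _).mpr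
          (LieSubmodule.lie_mem_lie (LieSubmodule.mem_top _) (LieSubmodule.mem_top _)) }
  have hsK : s ⊆ K := fun y hy =>
    Submodule.mem_sup_left (Submodule.subset_span hy)
  exact LieSubalgebra.lieSpan_le.mpr hsK hx

/-- In a nilpotent Lie algebra, a subalgebra which together with the commutator
spans everything must be everything. -/
private lemma lieSubalgebra_eq_top_of_sup_comm [LieRing.IsNilpotent L]
    (K : LieSubalgebra k L)
    (hK : K.toSubmodule ⊔ commSub k L = ⊤) : K = ⊤ := by
  set C : ℕ → Submodule k L :=
    fun n => LieSubmodule.toSubmodule (LieModule.lowerCentralSeries k L L n)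
    with hC
  have hC1 : commSub k L = C 1 := by
    rw [commSub_eq, hC]
    show _ = LieSubmodule.toSubmodule (LieModule.lowerCentralSeries k L L 1)
    rw [LieModule.lowerCentralSeries_succ, LieModule.lowerCentralSeries_zero]
  have key : ∀ n, (K.toSubmodule ⊔ C n = ⊤) ∧ C n ≤ K.toSubmodule ⊔ C (n + 1) := by
    intro n
    induction n with
    | zero =>
      constructor
      · rw [hC]
        simp
      · intro x _
        rw [← hC1]
        exact hK ▸ Submodule.mem_top
    | succ n ih =>
      have hP : K.toSubmodule ⊔ C (n + 1) = ⊤ := by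
        rw [eq_top_iff, ← ih.1]
        exact sup_le le_sup_left ih.2
      refine ⟨hP, ?_⟩
      have hCn2 : ∀ z w : L, z ∈ C (n + 1) → ⁅w, z⁆ ∈ C (n + 2) := by
        intro z w hz
        show ⁅w, z⁆ ∈ LieSubmodule.toSubmodule (LieModule.lowerCentralSeries k L L (n + 2))
        rw [LieModule.lowerCentralSeries_succ]
        exact (LieSubmodule.mem_toSubmodule _).mpr
          (LieSubmodule.lie_mem_lie (LieSubmodule.mem_top _)
            ((LieSubmodule.mem_toSubmodule _).mp hz))
      show LieSubmodule.toSubmodule (LieModule.lowerCentralSeries k L L (n + 1))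
        ≤ K.toSubmodule ⊔ C (n + 2)
      rw [LieModule.lowerCentralSeries_succ, LieSubmodule.lieIdeal_oper_eq_linear_span',
        Submodule.span_le]
      rintro m ⟨x, -, y, hy, rfl⟩
      have hy' : y ∈ K.toSubmodule ⊔ C (n + 1) := ih.2 hy
      obtain ⟨c, hc, d, hd, rfl⟩ := Submodule.mem_sup.mp hy'
      have hx : x ∈ K.toSubmodule ⊔ C (n + 1) := hP ▸ Submodule.mem_top
      obtain ⟨a, ha, b, hb, rfl⟩ := Submodule.mem_sup.mp hx
      have expand : ⁅a + b, c + d⁆ = ⁅a, c⁆ + (⁅a + b, d⁆ + ⁅b, c⁆) := by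
        simp only [add_lie, lie_add]
        abel
      rw [expand]
      refine Submodule.add_mem _ (Submodule.mem_sup_left (K.lie_mem ha hc)) ?_
      refine Submodule.mem_sup_right (Submodule.add_mem _ (hCn2 d _ hd) ?_)
      have hskew : ⁅b, c⁆ = -⁅c, b⁆ := by rw [← lie_skew]
      rw [hskew]
      exact Submodule.neg_mem _ (hCn2 b c hb)
  obtain ⟨N, hN⟩ :=
    LieModule.IsNilpotent.nilpotent (R := k) (L := L) (M := L)
  have hfin : K.toSubmodule ⊔ C N = ⊤ := (key N).1
  rw [hC] at hfin
  simp only [hN, LieSubmodule.bot_toSubmodule, sup_bot_eq] at hfin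
  rw [← LieSubalgebra.toSubmodule_inj]
  simpa using hfin

end Lie

/-- Gaschütz lemma for nilpotent Lie algebras: let `f : 𝔤 → 𝔥` be a surjective
homomorphism of finite-dimensional nilpotent Lie algebras over a field `k` of
characteristic zero, and let `h₁, …, h_e` generate `𝔥` as a Lie algebra, where `e` is
at least the minimal number of generators of `𝔤` (the dimension of the abelianization
`𝔤/[𝔤,𝔤]`).  Then there exist generators `g₁, …, g_e` of `𝔤` with `f gᵢ = hᵢ`. -/
theorem gaschutz_nilpotent_lie
    {k : Type} [Field k] [CharZero k]
    {L₁ L₂ : Type} [LieRing L₁] [LieAlgebra k L₁] [LieRing L₂] [LieAlgebra k L₂]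
    [FiniteDimensional k L₁] [FiniteDimensional k L₂]
    [LieRing.IsNilpotent L₁] [LieRing.IsNilpotent L₂]
    (f : L₁ →ₗ⁅k⁆ L₂) (hf : Function.Surjective f)
    {e : ℕ} (h : Fin e → L₂)
    (hgen : LieSubalgebra.lieSpan k L₂ (Set.range h) = ⊤)
    (he : Module.finrank k
      (L₁ ⧸ ((⁅(⊤ : LieIdeal k L₁), (⊤ : LieIdeal k L₁)⁆ : LieIdeal k L₁) : Submodule k L₁))
      ≤ e) :
    ∃ g : Fin e → L₁, (∀ i, f (g i) = h i) ∧
      LieSubalgebra.lieSpan k L₁ (Set.range g) = ⊤ := by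
  classical
  set p : Submodule k L₁ := commSub k L₁ with hp
  -- the commutator of L₂ is contained in the image of the commutator of L₁
  have hC₂ : commSub k L₂ ≤ Submodule.map f.toLinearMap p := by
    rw [commSub_eq, LieSubmodule.lieIdeal_oper_eq_linear_span', Submodule.span_le]
    rintro m ⟨x, -, y, -, rfl⟩
    obtain ⟨x', rfl⟩ := hf x
    obtain ⟨y', rfl⟩ := hf y
    refine Submodule.mem_map.mpr ⟨⁅x', y'⁆, ?_, by simp⟩
    rw [hp, commSub_eq]
    exact (LieSubmodule.mem_toSubmodule _).mpr
      (LieSubmodule.lie_mem_lie (LieSubmodule.mem_top _) (LieSubmodule.mem_top _))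
  -- choose arbitrary preimages
  choose g₀ hg₀ using fun i => hf (h i)
  -- main span claim in L₁
  have hmain : p ⊔ (Submodule.span k (Set.range g₀) ⊔ LinearMap.ker f.toLinearMap) = ⊤ := by
    rw [eq_top_iff]
    intro x _
    have hfx : f x ∈ Submodule.span k (Set.range h) ⊔ commSub k L₂ :=
      lieSpan_le_span_sup_comm _ _ (hgen ▸ LieSubalgebra.mem_top _)
    obtain ⟨y, hy, w, hw, hyw⟩ := Submodule.mem_sup.mp hfx
    have hspan : Submodule.span k (Set.range h) =
        Submodule.map f.toLinearMap (Submodule.span k (Set.range g₀)) := by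
      rw [Submodule.map_span, ← Set.range_comp]
      have hcomp : ⇑f.toLinearMap ∘ g₀ = h := funext fun i => hg₀ i
      rw [hcomp]
    rw [hspan] at hy
    obtain ⟨s, hs, rfl⟩ := Submodule.mem_map.mp hy
    obtain ⟨c, hcp, rfl⟩ := Submodule.mem_map.mp (hC₂ hw)
    have hker : x - s - c ∈ LinearMap.ker f.toLinearMap := by
      rw [LinearMap.mem_ker, map_sub, map_sub]
      have : f.toLinearMap x = f x := rfl
      rw [this, ← hyw]
      abel
    exact Submodule.mem_sup.mpr ⟨c, hcp,
      s + (x - s - c),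
      Submodule.add_mem _ (Submodule.mem_sup_left hs) (Submodule.mem_sup_right hker), by abel⟩
  -- pass to the abelianization
  have hVe : finrank k (L₁ ⧸ p) ≤ e := he
  set v : Fin e → L₁ ⧸ p := fun i => p.mkQ (g₀ i) with hv
  set W : Submodule k (L₁ ⧸ p) := Submodule.map p.mkQ (LinearMap.ker f.toLinearMap) with hW
  have hmap : Submodule.map p.mkQ
      (Submodule.span k (Set.range g₀) ⊔ LinearMap.ker f.toLinearMap) =
      Submodule.span k (Set.range v) ⊔ W := by
    rw [Submodule.map_sup, Submodule.map_span, ← Set.range_comp]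
    rfl
  have hsup : Submodule.span k (Set.range v) ⊔ W = ⊤ := by
    rw [← hmap, Submodule.map_mkQ_eq_top]
    exact hmain

  obtain ⟨w, hwW, hwtop⟩ := gaschutz_linear W hVe v hsup
  choose z hzker hzw using fun i => Submodule.mem_map.mp (hwW i)
  refine ⟨fun i => g₀ i + z i, fun i => ?_, ?_⟩
  · show f.toLinearMap (g₀ i + z i) = h i
    rw [map_add, hzker i, add_zero]
    exact hg₀ i
  · apply lieSubalgebra_eq_top_of_sup_comm
    have hπg : (fun i => p.mkQ (g₀ i + z i)) = fun i => v i + w i := by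
      funext i
      rw [map_add, hzw i]
    have htop2 : Submodule.map p.mkQ
        (Submodule.span k (Set.range fun i => g₀ i + z i)) = ⊤ := by
      rw [Submodule.map_span, ← Set.range_comp]
      show Submodule.span k (Set.range fun i => p.mkQ (g₀ i + z i)) = ⊤
      rw [hπg]
      exact hwtop
    have hsup2 : p ⊔ Submodule.span k (Set.range fun i => g₀ i + z i) = ⊤ :=
      (Submodule.map_mkQ_eq_top p _).mp htop2
    rw [eq_top_iff, ← hsup2]
    refine sup_le le_sup_right (le_trans ?_ le_sup_left)
    rw [Submodule.span_le]
    exact LieSubalgebra.subset_lieSpan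
end
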